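/- Let d ≥ 1 and 0 < m < 1. Define H(η) = ((1−m)/m) (d w_d)^{m−1} · (∫₀^π (η − cos θ)^{1/(m−1)} sin^{d−1} θ cos θ dθ) · (∫₀^π (η − cos θ)^{1/(m−1)} sin^{d−1} θ dθ)^{m−2} for η > 1, where w_d is the volume of the d-dimensional unit ball. Then lim_{η→∞} H(η) = |S^d|^{m−1}/(m(d+1)). -/

import Mathlib

open MeasureTheory Real Filter Topology

lemma haux_base_lb {η θ : ℝ} (hη : 2 ≤ η) : (1:ℝ)/2 ≤ 1 - Real.cos θ / η := by
  have hη0 : (0:ℝ) < η := by linarith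
  have h1 : Real.cos θ / η ≤ 1/2 := by
    rw [div_le_iff₀ hη0]; nlinarith [Real.cos_le_one θ]
  linarith

lemma haux_base_pos {η θ : ℝ} (hη : 2 ≤ η) : (0:ℝ) < 1 - Real.cos θ / η :=
  lt_of_lt_of_le (by norm_num) (haux_base_lb hη)

/-- Mean value bound: `|(1-x)^p - 1| ≤ |p| 2^{1-p} |x|` for `|x| ≤ 1/2`, `p ≤ 0`. -/
lemma haux_mvt {p : ℝ} (hp : p ≤ 0) {x : ℝ} (hx : |x| ≤ 1/2) :
    |(1 - x) ^ p - 1| ≤ |p| * 2 ^ (1 - p) * |x| := by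
  set s : Set ℝ := Set.Icc (-(1/2):ℝ) (1/2) with hs_def
  have hs : Convex ℝ s := convex_Icc _ _
  have key : ∀ t ∈ s, HasDerivWithinAt (fun t : ℝ => (1 - t) ^ p)
      ((-1) * p * (1 - t) ^ (p - 1)) s t := by
    intro t ht
    have h1 : (0:ℝ) < 1 - t := by
      rcases ht with ⟨h2, h3⟩; simp at h3; linarith
    exact (((hasDerivAt_id t).const_sub 1).rpow_const (Or.inl h1.ne')).hasDerivWithinAt
  have bd : ∀ t ∈ s, ‖(-1:ℝ) * p * (1 - t) ^ (p - 1)‖ ≤ |p| * 2 ^ (1 - p) := by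
    intro t ht
    rcases ht with ⟨h2, h3⟩
    have h1 : (0:ℝ) < 1 - t := by simp at h3; linarith
    have h12 : (1:ℝ)/2 ≤ 1 - t := by simp at h3; linarith
    have hle : (1 - t) ^ (p - 1) ≤ ((1:ℝ)/2) ^ (p - 1) :=
      Real.rpow_le_rpow_of_nonpos (by norm_num) h12 (by linarith)
    have hhalf : ((1:ℝ)/2) ^ (p-1) = 2 ^ (1 - p) := by
      rw [one_div, Real.inv_rpow (by norm_num), ← Real.rpow_neg (by norm_num)]
      ring_nf
    have hpos : 0 ≤ (1 - t) ^ (p - 1) := Real.rpow_nonneg h1.le _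
    rw [norm_mul, norm_mul]
    simp only [norm_neg, norm_one, one_mul, Real.norm_eq_abs]
    rw [abs_of_nonneg hpos]
    calc |p| * (1-t)^(p-1) ≤ |p| * ((1/2:ℝ))^(p-1) :=
          mul_le_mul_of_nonneg_left hle (abs_nonneg p)
      _ = |p| * 2^(1-p) := by rw [hhalf]
  have hx' : x ∈ s := by
    rcases abs_le.mp hx with ⟨h1, h2⟩
    exact ⟨by linarith, by norm_num; linarith⟩
  have h0 : (0:ℝ) ∈ s := by constructor <;> norm_num
  have := hs.norm_image_sub_le_of_norm_hasDerivWithin_le key bd h0 hx'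
  simpa [Real.one_rpow] using this

/-- `η ((1 - c/η)^p - 1) → -pc` as `η → ∞` (derivative of `t ↦ (1-ct)^p` at `0`). -/
lemma haux_tendsto_eta_mul (p c : ℝ) :
    Tendsto (fun η : ℝ => η * ((1 - c/η)^p - 1)) atTop (𝓝 (-(p*c))) := by
  have hd : HasDerivAt (fun t : ℝ => (1 - c*t)^p) (-(p*c)) 0 := by
    have h := (((hasDerivAt_id (0:ℝ)).const_mul c).const_sub 1).rpow_const
      (p := p) (by left; norm_num)
    simpa using h.congr_deriv (by simp; ring)
  have hslope := hasDerivAt_iff_tendsto_slope.mp hd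
  have hinv : Tendsto (fun η : ℝ => η⁻¹) atTop (𝓝[≠] (0:ℝ)) := by
    apply tendsto_nhdsWithin_of_tendsto_nhds_of_eventually_within _ tendsto_inv_atTop_zero
    filter_upwards [eventually_gt_atTop (0:ℝ)] with η hη
    exact inv_ne_zero hη.ne'
  refine (hslope.comp hinv).congr' ?_
  filter_upwards [eventually_gt_atTop (0:ℝ)] with η hη
  have hη0 : η ≠ 0 := hη.ne'
  simp only [Function.comp_apply, slope_def_field]
  rw [div_eq_mul_inv c]
  field_simp
  simp only [mul_zero, sub_zero, Real.one_rpow]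
  ring

lemma haux_sin_cos_zero (n : ℕ) : (∫ θ in (0:ℝ)..π, Real.sin θ ^ n * Real.cos θ) = 0 := by
  have h := integral_sin_pow_mul_cos_pow_odd (a := 0) (b := π) n 0
  simpa [Real.sin_pi] using h

lemma haux_cos_sq (n : ℕ) :
    (∫ θ in (0:ℝ)..π, Real.cos θ ^ 2 * Real.sin θ ^ n)
      = (∫ θ in (0:ℝ)..π, Real.sin θ ^ n) / ((n:ℝ) + 2) := by
  have h2 : ∀ θ:ℝ, Real.cos θ^2 * Real.sin θ^n = Real.sin θ^n - Real.sin θ^(n+2) := by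
    intro θ; rw [Real.cos_sq']; ring
  have hsp := integral_sin_pow (a := 0) (b := π) n
  simp only [Real.sin_zero, Real.sin_pi, Real.cos_zero, Real.cos_pi, zero_pow (Nat.succ_ne_zero n),
    zero_mul, mul_one, sub_zero, zero_div, zero_add, mul_neg, mul_zero, zero_sub, neg_zero] at hsp
  simp_rw [h2]
  rw [intervalIntegral.integral_sub (by apply Continuous.intervalIntegrable; fun_prop)
    (by apply Continuous.intervalIntegrable; fun_prop), hsp]
  have hne : ((n:ℝ)+2) ≠ 0 := by positivity
  field_simp
  ring

/-- Limit of the bifurcation function `H` as `η → ∞`: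
`H(η) = ((1-m)/m)(d w_d)^{m-1} (∫₀^π (η-cosθ)^{1/(m-1)} sin^{d-1}θ cosθ dθ)
        (∫₀^π (η-cosθ)^{1/(m-1)} sin^{d-1}θ dθ)^{m-2}` tends to
`|S^d|^{m-1}/(m(d+1))`, where `w_d` is the volume of the `d`-dimensional unit ball and
`|S^d| = d w_d ∫₀^π sin^{d-1}θ dθ` is the area of the unit `d`-sphere. -/
theorem H_tendsto_atTop
    (d : ℕ) (hd : 1 ≤ d) (m : ℝ) (hm0 : 0 < m) (hm1 : m < 1) :
    Filter.Tendsto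
      (fun η : ℝ =>
        ((1 - m) / m) *
          ((d : ℝ) * (volume (Metric.ball (0 : EuclideanSpace ℝ (Fin d)) 1)).toReal) ^ (m - 1) *
          (∫ θ in (0 : ℝ)..π,
            (η - Real.cos θ) ^ ((1 : ℝ) / (m - 1)) * Real.sin θ ^ (d - 1) * Real.cos θ) *
          (∫ θ in (0 : ℝ)..π,
            (η - Real.cos θ) ^ ((1 : ℝ) / (m - 1)) * Real.sin θ ^ (d - 1)) ^ (m - 2))
      Filter.atTop
      (𝓝 (((d : ℝ) * (volume (Metric.ball (0 : EuclideanSpace ℝ (Fin d)) 1)).toReal *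
            ∫ θ in (0 : ℝ)..π, Real.sin θ ^ (d - 1)) ^ (m - 1) / (m * ((d : ℝ) + 1)))) := by
  have hm1' : m - 1 < 0 := by linarith
  set p : ℝ := (1:ℝ)/(m-1) with hp
  have hpneg : p < 0 := div_neg_of_pos_of_neg one_pos hm1'
  set n : ℕ := d - 1 with hn
  set c : ℝ := (d : ℝ) * (volume (Metric.ball (0 : EuclideanSpace ℝ (Fin d)) 1)).toReal with hc
  have hc0 : 0 ≤ c := by positivity
  set Iv : ℝ := ∫ θ in (0:ℝ)..π, Real.sin θ ^ n with hIv
  have hIpos : 0 < Iv := integral_sin_pow_pos n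
  -- continuity of the rescaled integrand
  have hcont : ∀ η : ℝ, 2 ≤ η → Continuous fun θ : ℝ => (1 - Real.cos θ / η)^p := by
    intro η hη
    rw [continuous_iff_continuousAt]
    intro θ
    exact ContinuousAt.rpow_const (by fun_prop) (Or.inl (haux_base_pos hη).ne')
  -- limit of the rescaled second integral
  have hB : Tendsto (fun η : ℝ => ∫ θ in (0:ℝ)..π, (1 - Real.cos θ/η)^p * Real.sin θ ^ n)
      atTop (𝓝 Iv) := by
    apply intervalIntegral.tendsto_integral_filter_of_dominated_convergence
      (bound := fun _ => (2:ℝ)^(-p))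
    · filter_upwards [eventually_ge_atTop (2:ℝ)] with η hη
      exact ((hcont η hη).mul (by fun_prop)).aestronglyMeasurable
    · filter_upwards [eventually_ge_atTop (2:ℝ)] with η hη
      refine Filter.Eventually.of_forall (fun θ _ => ?_)
      have h1 : (0:ℝ) < 1 - Real.cos θ / η := haux_base_pos hη
      have h2 : (1 - Real.cos θ / η)^p ≤ 2^(-p) := by
        calc (1 - Real.cos θ/η)^p ≤ ((1:ℝ)/2)^p :=
              Real.rpow_le_rpow_of_nonpos (by norm_num) (haux_base_lb hη) hpneg.le
          _ = 2^(-p) := by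
              rw [one_div, Real.inv_rpow (by norm_num), ← Real.rpow_neg (by norm_num)]
      have h3 : ‖Real.sin θ ^ n‖ ≤ 1 := by
        rw [norm_pow]
        exact pow_le_one₀ (norm_nonneg _) (by rw [Real.norm_eq_abs]; exact Real.abs_sin_le_one θ)
      rw [norm_mul]
      have h4 : ‖(1 - Real.cos θ/η)^p‖ = (1 - Real.cos θ/η)^p := by
        rw [Real.norm_eq_abs, abs_of_nonneg (Real.rpow_nonneg h1.le _)]
      calc ‖(1 - Real.cos θ/η)^p‖ * ‖Real.sin θ ^ n‖ ≤ ‖(1 - Real.cos θ/η)^p‖ * 1 :=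
            mul_le_mul_of_nonneg_left h3 (norm_nonneg _)
        _ ≤ 2^(-p) := by rw [mul_one, h4]; exact h2
    · exact intervalIntegrable_const
    · refine Filter.Eventually.of_forall (fun θ _ => ?_)
      have hbase : Tendsto (fun η : ℝ => 1 - Real.cos θ / η) atTop (𝓝 1) := by
        have h := tendsto_inv_atTop_zero.const_mul (Real.cos θ)
        have h2 := tendsto_const_nhds (x := (1:ℝ)) (f := atTop).sub h
        simpa [div_eq_mul_inv] using h2
      have hr : Tendsto (fun η : ℝ => (1 - Real.cos θ / η)^p) atTop (𝓝 1) := by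
        have hcnt : ContinuousAt (fun x : ℝ => x ^ p) 1 :=
          Real.continuousAt_rpow_const 1 p (Or.inl one_ne_zero)
        have := hcnt.tendsto.comp hbase
        simpa [Real.one_rpow, Function.comp_def] using this
      simpa using hr.mul (tendsto_const_nhds (x := Real.sin θ ^ n))
  -- limit of the rescaled, recentered first integral
  have hG : Tendsto (fun η : ℝ => ∫ θ in (0:ℝ)..π,
      (η * ((1 - Real.cos θ/η)^p - 1)) * (Real.sin θ ^ n * Real.cos θ))
      atTop (𝓝 (-p * (Iv / ((n:ℝ)+2)))) := by
    have hlim : Tendsto (fun η : ℝ => ∫ θ in (0:ℝ)..π,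
        (η * ((1 - Real.cos θ/η)^p - 1)) * (Real.sin θ ^ n * Real.cos θ))
        atTop (𝓝 (∫ θ in (0:ℝ)..π, (-(p * Real.cos θ)) * (Real.sin θ ^ n * Real.cos θ))) := by
      apply intervalIntegral.tendsto_integral_filter_of_dominated_convergence
        (bound := fun _ => |p| * 2^(1-p))
      · filter_upwards [eventually_ge_atTop (2:ℝ)] with η hη
        exact ((continuous_const.mul ((hcont η hη).sub continuous_const)).mul
          (by fun_prop)).aestronglyMeasurable
      · filter_upwards [eventually_ge_atTop (2:ℝ)] with η hη
        refine Filter.Eventually.of_forall (fun θ _ => ?_)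
        have hη0 : (0:ℝ) < η := by linarith
        have hxb : |Real.cos θ / η| ≤ 1/2 := by
          rw [abs_div, abs_of_pos hη0, div_le_iff₀ hη0]
          nlinarith [Real.abs_cos_le_one θ]
        have h1 : |(1 - Real.cos θ / η)^p - 1| ≤ |p| * 2^(1-p) * |Real.cos θ / η| :=
          haux_mvt hpneg.le hxb
        have hK : (0:ℝ) ≤ |p| * 2^(1-p) := by positivity
        have h2 : ‖η * ((1 - Real.cos θ/η)^p - 1)‖ ≤ |p| * 2^(1-p) := by
          rw [norm_mul, Real.norm_eq_abs, Real.norm_eq_abs, abs_of_pos hη0]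
          calc η * |(1 - Real.cos θ/η)^p - 1| ≤ η * (|p| * 2^(1-p) * |Real.cos θ / η|) :=
                mul_le_mul_of_nonneg_left h1 hη0.le
            _ = |p| * 2^(1-p) * |Real.cos θ| := by
                rw [abs_div (Real.cos θ) η, abs_of_pos hη0]
                field_simp
            _ ≤ |p| * 2^(1-p) * 1 :=
                mul_le_mul_of_nonneg_left (Real.abs_cos_le_one θ) hK
            _ = |p| * 2^(1-p) := mul_one _
        have h3 : ‖Real.sin θ ^ n * Real.cos θ‖ ≤ 1 := by
          rw [norm_mul, norm_pow]
          have h5 : ‖Real.sin θ‖ ≤ 1 := by rw [Real.norm_eq_abs]; exact Real.abs_sin_le_one θ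
          have h4 : ‖Real.cos θ‖ ≤ 1 := by rw [Real.norm_eq_abs]; exact Real.abs_cos_le_one θ
          calc ‖Real.sin θ‖ ^ n * ‖Real.cos θ‖ ≤ 1 * 1 :=
                mul_le_mul (pow_le_one₀ (norm_nonneg _) h5) h4 (norm_nonneg _) (by norm_num)
            _ = 1 := by norm_num
        calc ‖(η * ((1 - Real.cos θ/η)^p - 1)) * (Real.sin θ ^ n * Real.cos θ)‖
            = ‖η * ((1 - Real.cos θ/η)^p - 1)‖ * ‖Real.sin θ ^ n * Real.cos θ‖ := norm_mul _ _
          _ ≤ (|p| * 2^(1-p)) * 1 := mul_le_mul h2 h3 (norm_nonneg _) hK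
          _ = |p| * 2^(1-p) := mul_one _
      · exact intervalIntegrable_const
      · refine Filter.Eventually.of_forall (fun θ _ => ?_)
        exact (haux_tendsto_eta_mul p (Real.cos θ)).mul
          (tendsto_const_nhds (x := Real.sin θ ^ n * Real.cos θ))
    convert hlim using 1
    congr 1
    have h1 : ∀ θ:ℝ, (-(p * Real.cos θ)) * (Real.sin θ ^ n * Real.cos θ)
        = (-p) * (Real.cos θ^2 * Real.sin θ^n) := by
      intro θ; ring
    simp_rw [h1]
    rw [intervalIntegral.integral_const_mul, haux_cos_sq n]
  -- eventual identity rewriting `H` in rescaled form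
  have heq : (fun η : ℝ =>
      ((1 - m) / m) * c ^ (m - 1) *
        (∫ θ in (0 : ℝ)..π, (η - Real.cos θ) ^ p * Real.sin θ ^ n * Real.cos θ) *
        (∫ θ in (0 : ℝ)..π, (η - Real.cos θ) ^ p * Real.sin θ ^ n) ^ (m - 2))
      =ᶠ[atTop] (fun η : ℝ =>
      ((1 - m) / m * c ^ (m - 1)) *
          (∫ θ in (0:ℝ)..π, (η * ((1 - Real.cos θ/η)^p - 1)) * (Real.sin θ ^ n * Real.cos θ)) *
          (∫ θ in (0:ℝ)..π, (1 - Real.cos θ/η)^p * Real.sin θ ^ n) ^ (m - 2)) := by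
    have hm1'' : m - 1 ≠ 0 := hm1'.ne
    filter_upwards [eventually_ge_atTop (2:ℝ)] with η hη
    have hη0 : (0:ℝ) < η := by linarith
    have hpt : ∀ θ : ℝ, (η - Real.cos θ)^p = η^p * (1 - Real.cos θ/η)^p := by
      intro θ
      rw [← Real.mul_rpow hη0.le (haux_base_pos hη).le]
      congr 1
      field_simp
    set At : ℝ := ∫ θ in (0:ℝ)..π, (1 - Real.cos θ/η)^p * (Real.sin θ ^ n * Real.cos θ)
      with hAt_def
    set Bt : ℝ := ∫ θ in (0:ℝ)..π, (1 - Real.cos θ/η)^p * Real.sin θ ^ n with hBt_def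
    have hA : (∫ θ in (0:ℝ)..π, (η - Real.cos θ)^p * Real.sin θ ^ n * Real.cos θ)
        = η^p * At := by
      rw [hAt_def, ← intervalIntegral.integral_const_mul]
      apply intervalIntegral.integral_congr
      intro θ _
      simp only [hpt θ]
      ring
    have hBeq : (∫ θ in (0:ℝ)..π, (η - Real.cos θ)^p * Real.sin θ ^ n) = η^p * Bt := by
      rw [hBt_def, ← intervalIntegral.integral_const_mul]
      apply intervalIntegral.integral_congr
      intro θ _
      simp only [hpt θ]
      ring
    have hint1 : IntervalIntegrable
        (fun θ => (1 - Real.cos θ/η)^p * (Real.sin θ ^ n * Real.cos θ)) volume 0 π :=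
      ((hcont η hη).mul (by fun_prop)).intervalIntegrable _ _
    have hint2 : IntervalIntegrable (fun θ => Real.sin θ ^ n * Real.cos θ) volume 0 π :=
      Continuous.intervalIntegrable (by fun_prop) _ _
    have hG_eq : (∫ θ in (0:ℝ)..π,
        (η * ((1 - Real.cos θ/η)^p - 1)) * (Real.sin θ ^ n * Real.cos θ)) = η * At := by
      calc (∫ θ in (0:ℝ)..π, (η * ((1 - Real.cos θ/η)^p - 1)) * (Real.sin θ ^ n * Real.cos θ))
          = ∫ θ in (0:ℝ)..π, (η * ((1 - Real.cos θ/η)^p * (Real.sin θ ^ n * Real.cos θ))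
              - η * (Real.sin θ ^ n * Real.cos θ)) := by
            apply intervalIntegral.integral_congr
            intro θ _; ring
        _ = (∫ θ in (0:ℝ)..π, η * ((1 - Real.cos θ/η)^p * (Real.sin θ ^ n * Real.cos θ)))
              - ∫ θ in (0:ℝ)..π, η * (Real.sin θ ^ n * Real.cos θ) :=
            intervalIntegral.integral_sub (hint1.const_mul η) (hint2.const_mul η)
        _ = η * At - η * 0 := by
            rw [intervalIntegral.integral_const_mul, intervalIntegral.integral_const_mul,
              haux_sin_cos_zero n]
        _ = η * At := by ring
    have hBtnn : 0 ≤ Bt := by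
      rw [hBt_def]
      apply intervalIntegral.integral_nonneg Real.pi_pos.le
      intro θ hθ
      exact mul_nonneg (Real.rpow_nonneg (haux_base_pos hη).le _)
        (pow_nonneg (Real.sin_nonneg_of_nonneg_of_le_pi hθ.1 hθ.2) _)
    have hpow : η^p * (η^p)^(m-2) = η := by
      rw [← Real.rpow_mul hη0.le, ← Real.rpow_add hη0]
      have h1 : p + p*(m-2) = 1 := by rw [hp]; field_simp; ring
      rw [h1, Real.rpow_one]
    rw [hA, hBeq, Real.mul_rpow (Real.rpow_nonneg hη0.le _) hBtnn, hG_eq]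
    calc ((1 - m) / m) * c ^ (m - 1) * (η^p * At) * ((η^p)^(m-2) * Bt^(m-2))
        = ((1 - m) / m * c ^ (m - 1)) * ((η^p * (η^p)^(m-2)) * At) * Bt^(m-2) := by ring
      _ = ((1 - m) / m * c ^ (m - 1)) * (η * At) * Bt^(m-2) := by rw [hpow]
  -- the value of the limit
  have hval : ((1 - m) / m * c ^ (m - 1)) * (-p * (Iv / ((n:ℝ)+2))) * Iv ^ (m - 2)
      = (c * Iv) ^ (m - 1) / (m * ((d : ℝ) + 1)) := by
    have h1m : (1:ℝ) - m ≠ 0 := by intro h; nlinarith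
    have hm1'' : m - 1 ≠ 0 := hm1'.ne
    have hnd : ((n:ℕ):ℝ) + 2 = (d:ℝ) + 1 := by
      rw [hn, Nat.cast_sub hd]; push_cast; ring
    have hD : ((d:ℝ) + 1) ≠ 0 := by positivity
    have hmul : (c*Iv)^(m-1) = c^(m-1) * Iv^(m-1) := Real.mul_rpow hc0 hIpos.le
    have hIsplit : Iv^(m-1) = Iv * Iv^(m-2) := by
      rw [show m - 1 = 1 + (m-2) by ring, Real.rpow_add hIpos, Real.rpow_one]
    have hpval : -p = 1/(1-m) := by rw [hp]; field_simp; ring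
    rw [hnd, hmul, hIsplit, hpval]
    field_simp
  rw [← hval]
  exact Tendsto.congr' heq.symm
    ((hG.const_mul ((1 - m) / m * c ^ (m - 1))).mul (hB.rpow_const (Or.inl hIpos.ne')))
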